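/- Let p be an odd prime. Then ∑_{u=1}^{p-1} ∑_{a=1}^{p-1} ((u·a - 1)·(u·ā - 1) | p) = 2, where (· | p) is the Legendre symbol and ā is the inverse of a mod p. -/

import Mathlib

open Finset
variable {p : ℕ} [Fact p.Prime]

example (hp : Odd p) : ringChar (ZMod p) ≠ 2 := by
  rw [ZMod.ringChar_zmod_n]; exact fun h => absurd (h ▸ hp) (by decide)

lemma aux_sum (hp : Odd p) (d : ZMod p) (hd : d ≠ 0) :
    ∑ v : ZMod p, quadraticChar (ZMod p) (v * (v + d)) = -1 := by
  have hchar : ringChar (ZMod p) ≠ 2 := by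
    rw [ZMod.ringChar_zmod_n]; exact fun h => absurd (h ▸ hp) (by decide)
  have h0 : ∑ v : ZMod p, quadraticChar (ZMod p) (v * (v + d))
      = ∑ v ∈ univ.erase (0 : ZMod p), quadraticChar (ZMod p) (v * (v + d)) := by
    rw [Finset.sum_erase]
    simp
  rw [h0]
  have h1 : ∀ v ∈ univ.erase (0 : ZMod p),
      quadraticChar (ZMod p) (v * (v + d)) = quadraticChar (ZMod p) (1 + d * v⁻¹) := by
    intro v hv
    rw [Finset.mem_erase] at hv
    have hv0 : v ≠ 0 := hv.1
    have : v * (v + d) = v ^ 2 * (1 + d * v⁻¹) := by field_simp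
    rw [this, map_mul, quadraticChar_sq_one' hv0, one_mul]
  rw [Finset.sum_congr rfl h1]
  have h2 : ∑ v ∈ univ.erase (0 : ZMod p), quadraticChar (ZMod p) (1 + d * v⁻¹)
      = ∑ w ∈ univ.erase (1 : ZMod p), quadraticChar (ZMod p) w := by
    apply Finset.sum_nbij' (fun v => 1 + d * v⁻¹) (fun w => d * (w - 1)⁻¹)
    · intro v hv
      rw [Finset.mem_erase] at hv ⊢
      refine ⟨?_, Finset.mem_univ _⟩
      intro h
      have : d * v⁻¹ = 0 := by linear_combination h
      rcases mul_eq_zero.mp this with h' | h'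
      · exact hd h'
      · exact hv.1 (inv_eq_zero.mp h')
    · intro w hw
      rw [Finset.mem_erase] at hw ⊢
      refine ⟨?_, Finset.mem_univ _⟩
      intro h
      rcases mul_eq_zero.mp h with h' | h'
      · exact hd h'
      · exact hw.1 (by have := inv_eq_zero.mp h'; linear_combination this)
    · intro v hv
      rw [Finset.mem_erase] at hv
      field_simp
      rw [add_sub_cancel_left, div_div_cancel₀ hd]
    · intro w hw
      rw [Finset.mem_erase] at hw
      have : w - 1 ≠ 0 := sub_ne_zero.mpr hw.1
      field_simp
      ring
    · intros; rfl
  rw [h2, Finset.sum_erase_eq_sub (Finset.mem_univ _), quadraticChar_sum_zero hchar]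
  simp

theorem stmt_7 (p : ℕ) [Fact p.Prime] (hp : Odd p) :
    ∑ u ∈ univ.filter (fun u : ZMod p => u ≠ 0),
      ∑ a ∈ univ.filter (fun a : ZMod p => a ≠ 0),
        legendreSym p (((u * a - 1) * (u * a⁻¹ - 1) : ZMod p).val : ℤ) = 2 := by
  have hprime : p.Prime := Fact.out
  have hp2 : p ≠ 2 := fun h => absurd (h ▸ hp) (by decide)
  have hp3 : 3 ≤ p := by
    rcases hprime.two_le.lt_or_eq with h | h
    · omega
    · omega
  have hchar : ringChar (ZMod p) ≠ 2 := by
    rw [ZMod.ringChar_zmod_n]; exact hp2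
  have hone : (1 : ZMod p) ≠ -1 :=
    fun h => Ring.neg_one_ne_one_of_char_ne_two hchar h.symm
  have hnegone0 : (-1 : ZMod p) ≠ 0 := by
    simp
  set χ := quadraticChar (ZMod p) with hχ
  -- rewrite the summand
  have hsummand : ∀ u a : ZMod p, a ≠ 0 →
      legendreSym p (((u * a - 1) * (u * a⁻¹ - 1) : ZMod p).val : ℤ)
        = χ ((u - a) * (u - a⁻¹)) := by
    intro u a ha
    unfold legendreSym
    rw [hχ]
    congr 1
    push_cast
    rw [ZMod.natCast_val, ZMod.cast_id]
    field_simp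
  rw [Finset.sum_comm]
  simp only [Finset.filter_ne']
  rw [Finset.sum_congr rfl (fun a ha => Finset.sum_congr rfl
      (fun u _ => hsummand u a (Finset.mem_erase.mp ha).1))]
  -- inner sum computation
  have hinner : ∀ a ∈ univ.erase (0 : ZMod p),
      ∑ u ∈ univ.erase (0 : ZMod p), χ ((u - a) * (u - a⁻¹))
        = if a = 1 ∨ a = -1 then (p : ℤ) - 2 else -2 := by
    intro a ha
    have ha0 : a ≠ 0 := (Finset.mem_erase.mp ha).1
    rw [Finset.sum_erase_eq_sub (Finset.mem_univ _)]
    have h00 : χ ((0 - a) * (0 - a⁻¹)) = 1 := by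
      have : (0 - a) * (0 - a⁻¹) = 1 := by field_simp; ring
      rw [this, map_one]
    rw [h00]
    by_cases hcase : a = 1 ∨ a = -1
    · have hainv : a⁻¹ = a := by
        rcases hcase with h | h <;> subst h
        · simp
        · exact inv_eq_of_mul_eq_one_right (by rw [neg_mul_neg, one_mul])
      rw [if_pos hcase, hainv]
      have hF : ∑ u : ZMod p, χ ((u - a) * (u - a)) = (p : ℤ) - 1 := by
        rw [← Finset.sum_erase_add _ _ (Finset.mem_univ a)]
        have h1 : ∀ u ∈ univ.erase a, χ ((u - a) * (u - a)) = 1 := by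
          intro u hu
          have : u - a ≠ 0 := sub_ne_zero.mpr (Finset.mem_erase.mp hu).1
          rw [← sq]
          exact quadraticChar_sq_one' this
        rw [Finset.sum_congr rfl h1, Finset.sum_const, Finset.card_erase_of_mem (Finset.mem_univ _),
          Finset.card_univ, ZMod.card]
        have hz : χ ((a - a) * (a - a)) = 0 := by
          simp [hχ, sub_self]
        rw [hz]
        simp only [nsmul_eq_mul, mul_one, add_zero, Nat.cast_sub hprime.one_lt.le]
        push_cast
        ring
      rw [hF]; ring
    · rw [if_neg hcase]
      have hd : a - a⁻¹ ≠ 0 := by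
        intro h
        have h2 : a = a⁻¹ := sub_eq_zero.mp h
        have h' : a * a = 1 := by
          nth_rewrite 2 [h2]
          exact mul_inv_cancel₀ ha0
        have : a = 1 ∨ a = -1 := by
          have := mul_self_eq_one_iff.mp h'
          tauto
        exact hcase this
      have hF : ∑ u : ZMod p, χ ((u - a) * (u - a⁻¹)) = -1 := by
        rw [show ∑ u : ZMod p, χ ((u - a) * (u - a⁻¹))
            = ∑ v : ZMod p, χ (v * (v + (a - a⁻¹))) from
          Fintype.sum_equiv (Equiv.subRight a) _ _ (fun u => by
            simp [Equiv.subRight])]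
        exact aux_sum hp _ hd
      rw [hF]; ring
  rw [Finset.sum_congr rfl hinner]
  rw [Finset.sum_ite, Finset.sum_const, Finset.sum_const]
  have hset : (univ.erase (0 : ZMod p)).filter (fun a => a = 1 ∨ a = -1) = {1, -1} := by
    ext x
    simp only [Finset.mem_filter, Finset.mem_erase, Finset.mem_univ, Finset.mem_insert,
      Finset.mem_singleton, true_and, and_true]
    constructor
    · tauto
    · rintro (rfl | rfl)
      · exact ⟨one_ne_zero, Or.inl rfl⟩
      · exact ⟨hnegone0, Or.inr rfl⟩
  have hcard1 : ((univ.erase (0 : ZMod p)).filter (fun a => a = 1 ∨ a = -1)).card = 2 := by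
    rw [hset]
    rw [Finset.card_insert_of_notMem (by simpa using hone), Finset.card_singleton]
  have hcard2 : ((univ.erase (0 : ZMod p)).filter (fun a => ¬(a = 1 ∨ a = -1))).card = p - 3 := by
    have := Finset.card_filter_add_card_filter_not
      (s := univ.erase (0 : ZMod p)) (p := fun a => a = 1 ∨ a = -1)
    rw [hcard1, Finset.card_erase_of_mem (Finset.mem_univ _), Finset.card_univ, ZMod.card] at this
    omega
  rw [hcard1, hcard2]
  simp only [nsmul_eq_mul, Nat.cast_sub hp3]
  push_cast
  ring
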